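/- Let K ∈ 𝒦 with level values k_j and set α_l = 2^{-l}(k_{-l} − k_{-l+1}) for l ∈ ℤ. Then Σ_{l∈ℤ} |α_l| < ∞, Σ_{l∈ℤ} α_l = 1, and the function φ(s) = Σ_{l∈ℤ} α_l 2^l χ_{(0,2^{-l}]}(s) (s > 0) satisfies φ(δ(x,y)) = K(x,y) for all x ≠ y in ℝ⁺, ∫_0^∞ |φ(s)| ds < ∞, and ∫_0^∞ φ(s) ds = 1. -/

import Mathlib

open MeasureTheory Set Filter

/-- The dyadic distance on ℝ⁺: the infimum of the lengths of the dyadic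
intervals `[k·2^{-j}, (k+1)·2^{-j})` containing both points (and `0` on the diagonal). -/
noncomputable def dyadicDist (x y : ℝ) : ℝ :=
  if x = y then 0
  else sInf {r : ℝ | ∃ (j : ℤ) (k : ℕ), r = (2:ℝ) ^ (-j) ∧
    x ∈ Set.Ico ((k : ℝ) * (2:ℝ) ^ (-j)) (((k : ℝ) + 1) * (2:ℝ) ^ (-j)) ∧
    y ∈ Set.Ico ((k : ℝ) * (2:ℝ) ^ (-j)) (((k : ℝ) + 1) * (2:ℝ) ^ (-j))}

/-- The sequence `α_l = 2^{-l}(k_{-l} - k_{-l+1})` associated to the level values `k` of a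
kernel in `𝒦`. -/
noncomputable def alphaOf (k : ℤ → ℝ) (l : ℤ) : ℝ :=
  (2:ℝ) ^ (-l) * (k (-l) - k (-l + 1))

/-- The profile `φ(s) = Σ_{l∈ℤ} α_l 2^l χ_{(0,2^{-l}]}(s)` associated to the level values `k`. -/
noncomputable def phiOf (k : ℤ → ℝ) (s : ℝ) : ℝ :=
  ∑' l : ℤ, alphaOf k l * ((2:ℝ) ^ l * (if s ∈ Set.Ioc (0:ℝ) ((2:ℝ) ^ (-l)) then 1 else 0))

/-- The sequence `Λ_j = Σ_{l>j} α_l` associated to the level values `k`. -/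
noncomputable def LambdaOf (k : ℤ → ℝ) (j : ℤ) : ℝ :=
  ∑' m : ℕ, alphaOf k (j + 1 + m)

/-- The Haar function `h^j_k(x) = 2^{j/2}(χ_{[0,1/2)} - χ_{[1/2,1)})(2^j x - k)`,
supported in the dyadic interval `I^j_k = [k·2^{-j},(k+1)·2^{-j})`. -/
noncomputable def haarFn (j : ℤ) (k : ℕ) (x : ℝ) : ℝ :=
  (2:ℝ) ^ ((j : ℝ) / 2) *
    (if (2:ℝ) ^ j * x - (k : ℝ) ∈ Set.Ico (0:ℝ) (1/2) then 1
     else if (2:ℝ) ^ j * x - (k : ℝ) ∈ Set.Ico (1/2 : ℝ) 1 then -1 else 0)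

namespace DyAux

noncomputable def nfl (j : ℤ) (x : ℝ) : ℕ := ⌊(2:ℝ)^j * x⌋₊

lemma two_zpow_pos (j : ℤ) : (0:ℝ) < 2^j := zpow_pos (by norm_num) j

lemma mem_Ico_iff {x : ℝ} (hx : 0 ≤ x) (j : ℤ) (c : ℕ) :
    x ∈ Set.Ico ((c:ℝ) * (2:ℝ)^(-j)) (((c:ℝ)+1) * (2:ℝ)^(-j)) ↔ nfl j x = c := by
  have hp := two_zpow_pos j
  have hne : ((2:ℝ)^(-j)) = ((2:ℝ)^j)⁻¹ := by rw [zpow_neg]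
  constructor
  · rintro ⟨h1, h2⟩
    have h1' : (c:ℝ) ≤ 2^j * x := by
      rw [hne] at h1
      calc (c:ℝ) = 2^j * ((c:ℝ) * ((2:ℝ)^j)⁻¹) := by field_simp
        _ ≤ 2^j * x := by nlinarith
    have h2' : 2^j * x < (c:ℝ) + 1 := by
      rw [hne] at h2
      calc (2:ℝ)^j * x < 2^j * (((c:ℝ)+1) * ((2:ℝ)^j)⁻¹) := by nlinarith
        _ = (c:ℝ) + 1 := by field_simp
    exact Nat.floor_eq_iff (by positivity) |>.2 ⟨by exact_mod_cast h1', by exact_mod_cast h2'⟩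
  · intro h
    have h0 : 0 ≤ 2^j * x := by positivity
    have := (Nat.floor_eq_iff h0).1 h
    obtain ⟨h1, h2⟩ := this
    constructor
    · rw [hne]
      calc (c:ℝ) * ((2:ℝ)^j)⁻¹ ≤ (2^j * x) * ((2:ℝ)^j)⁻¹ := by
            apply mul_le_mul_of_nonneg_right h1 (by positivity)
        _ = x := by field_simp
    · rw [hne]
      calc x = (2^j * x) * ((2:ℝ)^j)⁻¹ := by field_simp
        _ < ((c:ℝ)+1) * ((2:ℝ)^j)⁻¹ := by
            apply mul_lt_mul_of_pos_right h2 (by positivity)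

lemma nfl_pred (j : ℤ) (x : ℝ) : nfl (j-1) x = nfl j x / 2 := by
  have : (2:ℝ)^(j-1) * x = (2:ℝ)^j * x / ((2:ℕ):ℝ) := by
    push_cast
    rw [zpow_sub₀ (by norm_num)]
    ring
  rw [nfl, this, Nat.floor_div_natCast]
  rfl

lemma nfl_mono_eq {x y : ℝ} {i j : ℤ} (hij : i ≤ j) (h : nfl j x = nfl j y) :
    nfl i x = nfl i y := by
  obtain ⟨n, rfl⟩ : ∃ n : ℕ, i = j - n := ⟨(j - i).toNat, by omega⟩
  induction n with
  | zero => simpa using h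
  | succ n ih =>
      have : (j - (n+1:ℕ) : ℤ) = (j - n) - 1 := by push_cast; ring
      rw [this, nfl_pred, nfl_pred, ih (by omega)]

lemma exists_lower {x y : ℝ} (hx : 0 ≤ x) (hy : 0 ≤ y) :
    ∃ j : ℤ, nfl j x = nfl j y := by
  obtain ⟨n, hn⟩ := exists_nat_gt (max x y)
  have hn2 : (n:ℝ) ≤ 2^n := by exact_mod_cast (Nat.lt_two_pow_self (n := n)).le
  refine ⟨-n, ?_⟩
  have hx' : (2:ℝ)^(-(n:ℤ)) * x < 1 := by
    rw [zpow_neg, zpow_natCast]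
    have hx2 : x < 2^n := lt_of_le_of_lt (le_max_left x y) (lt_of_lt_of_le hn hn2)
    rw [inv_mul_lt_iff₀ (by positivity), mul_one]; exact hx2
  have hy' : (2:ℝ)^(-(n:ℤ)) * y < 1 := by
    rw [zpow_neg, zpow_natCast]
    have hy2 : y < 2^n := lt_of_le_of_lt (le_max_right x y) (lt_of_lt_of_le hn hn2)
    rw [inv_mul_lt_iff₀ (by positivity), mul_one]; exact hy2
  rw [nfl, nfl, Nat.floor_eq_zero.2 hx', Nat.floor_eq_zero.2 hy']

lemma bdd_above {x y : ℝ} (hx : 0 ≤ x) (hy : 0 ≤ y) (hxy : x ≠ y) :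
    ∃ b : ℤ, ∀ j : ℤ, nfl j x = nfl j y → j ≤ b := by
  have hd : 0 < |x - y| := abs_pos.2 (sub_ne_zero.2 hxy)
  obtain ⟨n, hn⟩ := exists_nat_gt (|x - y|⁻¹)
  have hn2 : (n:ℝ) ≤ 2^n := by exact_mod_cast (Nat.lt_two_pow_self (n := n)).le
  refine ⟨n, fun j hj => ?_⟩
  by_contra hjn
  push_neg at hjn
  have hjn' : (n:ℤ) < j := by omega
  have hfx : ((nfl j x : ℝ)) ≤ 2^j * x := Nat.floor_le (by positivity)
  have hfy : ((nfl j y : ℝ)) ≤ 2^j * y := Nat.floor_le (by positivity)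
  have hfx' : 2^j * x < (nfl j x : ℝ) + 1 := Nat.lt_floor_add_one _
  have hfy' : 2^j * y < (nfl j y : ℝ) + 1 := Nat.lt_floor_add_one _
  rw [hj] at hfx hfx'
  have habs : |2^j * x - 2^j * y| < 1 := abs_sub_lt_iff.2 ⟨by linarith, by linarith⟩
  rw [← mul_sub, abs_mul, abs_of_pos (two_zpow_pos j)] at habs
  have hj2 : (n:ℝ) ≤ 2^j := by
    calc (n:ℝ) ≤ 2^n := hn2
      _ = (2:ℝ)^(n:ℤ) := by rw [zpow_natCast]
      _ ≤ 2^j := zpow_le_zpow_right₀ one_le_two hjn'.le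
  have : |x - y|⁻¹ < 2^j := lt_of_lt_of_le hn hj2
  rw [inv_lt_iff_one_lt_mul₀ hd] at this
  linarith [mul_comm ((2:ℝ)^j) |x - y|, this]

end DyAux

namespace DyAux2
open DyAux

/-- greatest scale at which x,y share a dyadic interval -/
lemma exists_greatest {x y : ℝ} (hx : 0 ≤ x) (hy : 0 ≤ y) (hxy : x ≠ y) :
    ∃ j₀ : ℤ, nfl j₀ x = nfl j₀ y ∧ ∀ j, nfl j x = nfl j y → j ≤ j₀ := by
  obtain ⟨b, hb⟩ := bdd_above hx hy hxy
  obtain ⟨j₀, h1, h2⟩ := Int.exists_greatest_of_bdd ⟨b, hb⟩ (exists_lower hx hy)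
  exact ⟨j₀, h1, h2⟩

lemma dyadicDist_eq_of_greatest {x y : ℝ} (hx : 0 ≤ x) (hy : 0 ≤ y) (hxy : x ≠ y)
    {j₀ : ℤ} (h1 : nfl j₀ x = nfl j₀ y) (h2 : ∀ j, nfl j x = nfl j y → j ≤ j₀) :
    dyadicDist x y = (2:ℝ) ^ (-j₀) := by
  rw [dyadicDist, if_neg hxy]
  apply IsLeast.csInf_eq
  constructor
  · exact ⟨j₀, nfl j₀ x, rfl, (mem_Ico_iff hx j₀ _).2 rfl, (mem_Ico_iff hy j₀ _).2 h1.symm⟩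
  · rintro r ⟨j, c, rfl, hxm, hym⟩
    have hcx := (mem_Ico_iff hx j c).1 hxm
    have hcy := (mem_Ico_iff hy j c).1 hym
    exact zpow_le_zpow_right₀ one_le_two (by have := h2 j (hcx.trans hcy.symm); omega)

lemma dyadicDist_eq_two_zpow_iff {x y : ℝ} (hx : 0 ≤ x) (hy : 0 ≤ y) (hxy : x ≠ y) (m : ℤ) :
    dyadicDist x y = (2:ℝ) ^ m ↔
      (nfl (-m) x = nfl (-m) y ∧ nfl (-m+1) x ≠ nfl (-m+1) y) := by
  obtain ⟨j₀, h1, h2⟩ := exists_greatest hx hy hxy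
  have hd := dyadicDist_eq_of_greatest hx hy hxy h1 h2
  constructor
  · intro h
    have : (-j₀ : ℤ) = m := by
      have := h ▸ hd
      exact (zpow_right_injective₀ (by norm_num : (0:ℝ) < 2) (by norm_num) this).symm
    subst this
    simp only [neg_neg]
    refine ⟨h1, fun hc => ?_⟩
    have := h2 _ hc; omega
  · rintro ⟨hm1, hm2⟩
    have hj₀ : j₀ = -m := by
      have hle : -m ≤ j₀ := h2 _ hm1
      rcases hle.lt_or_eq with hlt | heq
      · exact absurd (nfl_mono_eq (by omega) h1) hm2
      · omega
    rw [hd, hj₀, neg_neg]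

lemma exists_dyadicDist_eq {x y : ℝ} (hx : 0 ≤ x) (hy : 0 ≤ y) (hxy : x ≠ y) :
    ∃ m : ℤ, dyadicDist x y = (2:ℝ) ^ m := by
  obtain ⟨j₀, h1, h2⟩ := exists_greatest hx hy hxy
  exact ⟨-j₀, dyadicDist_eq_of_greatest hx hy hxy h1 h2⟩

end DyAux2

namespace DyAux3
open DyAux DyAux2

noncomputable def Bset (x₀ : ℝ) (j : ℤ) : Set ℝ :=
  Set.Ico ((nfl j x₀ : ℝ) * (2:ℝ)^(-j)) (((nfl j x₀ : ℝ)+1) * (2:ℝ)^(-j))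

lemma mem_Bset {x₀ y : ℝ} (hy : 0 ≤ y) (j : ℤ) :
    y ∈ Bset x₀ j ↔ nfl j y = nfl j x₀ := mem_Ico_iff hy j _

lemma Bset_subset_Ici (x₀ : ℝ) (j : ℤ) : Bset x₀ j ⊆ Set.Ici 0 := by
  intro y hy
  have := hy.1
  have h0 : (0:ℝ) ≤ (nfl j x₀ : ℝ) * (2:ℝ)^(-j) := by positivity
  exact le_trans h0 this

lemma Bset_anti (x₀ : ℝ) (j : ℤ) : Bset x₀ (j+1) ⊆ Bset x₀ j := by
  intro y hy
  have hy0 : 0 ≤ y := Bset_subset_Ici x₀ (j+1) hy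
  rw [mem_Bset hy0] at hy
  rw [mem_Bset hy0]
  exact nfl_mono_eq (by omega) hy

lemma volume_Bset (x₀ : ℝ) (j : ℤ) : volume (Bset x₀ j) = ENNReal.ofReal ((2:ℝ)^(-j)) := by
  rw [Bset, Real.volume_Ico]
  ring_nf

lemma measurableSet_Bset (x₀ : ℝ) (j : ℤ) : MeasurableSet (Bset x₀ j) := measurableSet_Ico

noncomputable def Aset (x₀ : ℝ) (m : ℤ) : Set ℝ := Bset x₀ (-m) \ Bset x₀ (-m+1)

lemma measurableSet_Aset (x₀ : ℝ) (m : ℤ) : MeasurableSet (Aset x₀ m) :=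
  (measurableSet_Bset _ _).diff (measurableSet_Bset _ _)

lemma volume_Aset (x₀ : ℝ) (m : ℤ) : volume (Aset x₀ m) = ENNReal.ofReal ((2:ℝ)^(m-1)) := by
  rw [Aset, measure_diff ((by simpa using Bset_anti x₀ (-m)))
    (measurableSet_Bset _ _).nullMeasurableSet
    (by rw [volume_Bset]; exact ENNReal.ofReal_ne_top),
    volume_Bset, volume_Bset, ← ENNReal.ofReal_sub _ (by positivity)]
  congr 1
  rw [neg_neg]
  have h1 : (-(-m+1) : ℤ) = m - 1 := by ring
  rw [h1]
  have : (2:ℝ)^m = 2^(m-1) * 2 := by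
    rw [← zpow_add_one₀ (by norm_num : (2:ℝ) ≠ 0) (m-1)]
    congr 1; ring
  rw [this]; ring

lemma mem_Aset_iff {x₀ y : ℝ} (hx₀ : 0 ≤ x₀) (hy : 0 ≤ y) (m : ℤ) :
    y ∈ Aset x₀ m ↔ (x₀ ≠ y ∧ dyadicDist x₀ y = (2:ℝ)^m) := by
  constructor
  · rintro ⟨h1, h2⟩
    rw [mem_Bset hy] at h1
    rw [mem_Bset hy] at h2
    have hne : x₀ ≠ y := by
      rintro rfl; exact h2 rfl
    refine ⟨hne, (dyadicDist_eq_two_zpow_iff hx₀ hy hne m).2 ⟨h1.symm, fun hc => h2 hc.symm⟩⟩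
  · rintro ⟨hne, hd⟩
    obtain ⟨h1, h2⟩ := (dyadicDist_eq_two_zpow_iff hx₀ hy hne m).1 hd
    exact ⟨(mem_Bset hy _).2 h1.symm, fun hc => h2 (((mem_Bset hy _).1 hc).symm)⟩

lemma Aset_disjoint (x₀ : ℝ) (hx₀ : 0 ≤ x₀) : Pairwise (Function.onFun Disjoint (Aset x₀)) := by
  intro m m' hmm'
  rw [Function.onFun, Set.disjoint_left]
  intro y hym hym'
  have hy : 0 ≤ y := Bset_subset_Ici x₀ (-m) hym.1
  obtain ⟨hne, hd⟩ := (mem_Aset_iff hx₀ hy m).1 hym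
  obtain ⟨_, hd'⟩ := (mem_Aset_iff hx₀ hy m').1 hym'
  exact hmm' (zpow_right_injective₀ (by norm_num : (0:ℝ) < 2) (by norm_num) (show (fun n => (2:ℝ) ^ n) m = (fun n => (2:ℝ) ^ n) m' by simp only []; rw [← hd, ← hd']))

lemma iUnion_Aset (x₀ : ℝ) (hx₀ : 0 ≤ x₀) :
    (⋃ m : ℤ, Aset x₀ m) = Set.Ici 0 \ {x₀} := by
  ext y
  simp only [Set.mem_iUnion, Set.mem_diff, Set.mem_Ici, Set.mem_singleton_iff]
  constructor
  · rintro ⟨m, hm⟩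
    have hy : 0 ≤ y := Bset_subset_Ici x₀ (-m) hm.1
    obtain ⟨hne, _⟩ := (mem_Aset_iff hx₀ hy m).1 hm
    exact ⟨hy, fun h => hne h.symm⟩
  · rintro ⟨hy, hne⟩
    obtain ⟨m, hm⟩ := exists_dyadicDist_eq hx₀ hy (fun h => hne h.symm)
    exact ⟨m, (mem_Aset_iff hx₀ hy m).2 ⟨fun h => hne h.symm, hm⟩⟩

end DyAux3

namespace DyAux4
open DyAux DyAux2 DyAux3

lemma k_nonneg (K : ℝ → ℝ → ℝ) (k : ℤ → ℝ)
    (hK0 : ∀ x y : ℝ, 0 ≤ x → 0 ≤ y → 0 ≤ K x y)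
    (hk : ∀ (j : ℤ) (x y : ℝ), 0 ≤ x → 0 ≤ y → dyadicDist x y = (2:ℝ) ^ j → K x y = k j)
    (m : ℤ) : 0 ≤ k m := by
  have hy : (0:ℝ) ≤ (2:ℝ)^(m-1) := by positivity
  have hne : (0:ℝ) ≠ (2:ℝ)^(m-1) := by
    intro h; exact absurd h.symm (ne_of_gt (two_zpow_pos (m-1)))
  have hd : dyadicDist 0 ((2:ℝ)^(m-1)) = (2:ℝ)^m := by
    rw [dyadicDist_eq_two_zpow_iff le_rfl hy hne m]
    constructor
    · show (⌊(2:ℝ)^(-m) * 0⌋₊ : ℕ) = ⌊(2:ℝ)^(-m) * (2:ℝ)^(m-1)⌋₊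
      rw [mul_zero, ← zpow_add₀ (by norm_num : (2:ℝ) ≠ 0)]
      have : (-m + (m-1) : ℤ) = -1 := by ring
      rw [this]
      rw [show ((2:ℝ)^(-1:ℤ)) = 1/2 by norm_num]
      rw [Nat.floor_eq_zero.2 (by norm_num : (1/2:ℝ) < 1)]
      simp
    · show (⌊(2:ℝ)^(-m+1) * 0⌋₊ : ℕ) ≠ ⌊(2:ℝ)^(-m+1) * (2:ℝ)^(m-1)⌋₊
      rw [mul_zero, ← zpow_add₀ (by norm_num : (2:ℝ) ≠ 0)]
      have : (-m + 1 + (m-1) : ℤ) = 0 := by ring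
      rw [this]
      norm_num
  rw [← hk m 0 _ le_rfl hy hd]
  exact hK0 _ _ le_rfl hy

lemma hasSum_beta (K : ℝ → ℝ → ℝ) (k : ℤ → ℝ)
    (x₀ : ℝ) (hx₀ : 0 ≤ x₀)
    (hKnorm : (∫ y in Set.Ici (0:ℝ), K x₀ y) = 1)
    (hk : ∀ (j : ℤ) (x y : ℝ), 0 ≤ x → 0 ≤ y → dyadicDist x y = (2:ℝ) ^ j → K x y = k j) :
    HasSum (fun m : ℤ => (2:ℝ)^(m-1) * k m) 1 := by
  have hInt : IntegrableOn (K x₀) (Set.Ici 0) := by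
    by_contra h
    rw [integral_undef h] at hKnorm
    norm_num at hKnorm
  have hU : (⋃ m : ℤ, Aset x₀ m) = Set.Ici 0 \ {x₀} := iUnion_Aset x₀ hx₀
  have hIntU : IntegrableOn (K x₀) (⋃ m : ℤ, Aset x₀ m) := by
    apply hInt.mono_set
    rw [hU]; exact Set.diff_subset
  have hae : (⋃ m : ℤ, Aset x₀ m) =ᵐ[volume] Set.Ici (0:ℝ) := by
    rw [hU]
    exact MeasureTheory.diff_null_ae_eq_self (measure_singleton x₀)
  have hsum := hasSum_integral_iUnion (measurableSet_Aset x₀) (Aset_disjoint x₀ hx₀) hIntU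
  rw [setIntegral_congr_set hae, hKnorm] at hsum
  have heq : ∀ m : ℤ, (∫ y in Aset x₀ m, K x₀ y) = (2:ℝ)^(m-1) * k m := by
    intro m
    rw [setIntegral_congr_fun (measurableSet_Aset x₀ m) (g := fun _ => k m)
      (fun y hy => by
        have hy0 : 0 ≤ y := Bset_subset_Ici x₀ (-m) hy.1
        obtain ⟨_, hd⟩ := (mem_Aset_iff hx₀ hy0 m).1 hy
        exact hk m x₀ y hx₀ hy0 hd),
      setIntegral_const, measureReal_def, volume_Aset, ENNReal.toReal_ofReal (by positivity), smul_eq_mul]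
  exact hsum.congr_fun (fun m => (heq m).symm)

end DyAux4

namespace DyAux5
open DyAux

variable {k : ℤ → ℝ}

/-- abbreviation for the nonnegative summable weights -/
noncomputable def beta (k : ℤ → ℝ) (m : ℤ) : ℝ := (2:ℝ)^(m-1) * k m

lemma alpha_eq (l : ℤ) : alphaOf k l = 2 * beta k (-l) - beta k (-l+1) := by
  simp only [alphaOf, beta]
  have e1 : (2:ℝ) * 2^(-l-1) = 2^(-l) := by
    rw [mul_comm, ← zpow_add_one₀ (by norm_num : (2:ℝ) ≠ 0)]
    congr 1; ring
  have e2 : ((-l+1)-1 : ℤ) = -l := by ring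
  rw [e2]
  ring_nf
  rw [← e1]
  ring

section withSum

variable (hβ : HasSum (beta k) 1) (hk0 : ∀ m, 0 ≤ k m)
include hβ hk0

lemma k_tendsto : Tendsto k atTop (nhds 0) := by
  have hβ0 : Tendsto (beta k) atTop (nhds 0) :=
    (hβ.summable.tendsto_cofinite_zero).mono_left Filter.atTop_le_cofinite
  apply tendsto_of_tendsto_of_tendsto_of_le_of_le' tendsto_const_nhds hβ0
  · exact Eventually.of_forall (fun m => hk0 m)
  · filter_upwards [Filter.eventually_ge_atTop (1:ℤ)] with m hm
    have h1 : (1:ℝ) ≤ 2^(m-1) := one_le_zpow₀ (by norm_num) (by omega)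
    have := hk0 m
    calc k m = 1 * k m := (one_mul _).symm
      _ ≤ 2^(m-1) * k m := by nlinarith
      _ = beta k m := rfl

lemma summable_beta_neg : Summable (fun l : ℤ => beta k (-l)) :=
  (Equiv.neg ℤ).summable_iff.2 hβ.summable

lemma summable_beta_neg' : Summable (fun l : ℤ => beta k (-l+1)) := by
  have := (Equiv.subLeft (1:ℤ)).summable_iff.2 hβ.summable
  apply this.congr
  intro l
  show beta k (1-l) = beta k (-l+1)
  congr 1; ring

lemma summable_abs_alpha : Summable (fun l : ℤ => |alphaOf k l|) := by
  refine Summable.of_nonneg_of_le (fun l => abs_nonneg _) (fun l => ?_)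
    (((summable_beta_neg hβ hk0).mul_left 2).add (summable_beta_neg' hβ hk0))
  rw [alpha_eq]
  have h1 : 0 ≤ beta k (-l) := mul_nonneg (by positivity) (hk0 _)
  have h2 : 0 ≤ beta k (-l+1) := mul_nonneg (by positivity) (hk0 _)
  calc |2 * beta k (-l) - beta k (-l+1)| ≤ |2 * beta k (-l)| + |beta k (-l+1)| :=
        abs_sub _ _
    _ = 2 * beta k (-l) + beta k (-l+1) := by
        rw [abs_of_nonneg (by linarith), abs_of_nonneg h2]

lemma hasSum_alpha : HasSum (alphaOf k) 1 := by
  have h1 : HasSum (fun l : ℤ => beta k (-l)) 1 := (Equiv.neg ℤ).hasSum_iff.2 hβ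
  have h2 : HasSum (fun l : ℤ => beta k (-l+1)) 1 := by
    have := (Equiv.subLeft (1:ℤ)).hasSum_iff.2 hβ
    apply HasSum.congr_fun this
    intro l
    show beta k (-l+1) = beta k (1-l)
    congr 1; ring
  have h3 := (h1.mul_left 2).sub h2
  norm_num at h3
  exact h3.congr_fun (fun l => alpha_eq l)

end withSum
end DyAux5

namespace DyAux6
open DyAux DyAux5

variable {k : ℤ → ℝ}

lemma phi_eval (hβ : HasSum (beta k) 1) (hk0 : ∀ m, 0 ≤ k m)
    {m : ℤ} {s : ℝ} (hs1 : (2:ℝ)^(m-1) < s) (hs2 : s ≤ (2:ℝ)^m) :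
    phiOf k s = k m := by
  have hs0 : 0 < s := lt_of_le_of_lt (by positivity) hs1
  set f : ℤ → ℝ := fun l => alphaOf k l * ((2:ℝ) ^ l *
    (if s ∈ Set.Ioc (0:ℝ) ((2:ℝ) ^ (-l)) then 1 else 0)) with hf
  have hfl : ∀ l : ℤ, f l = if l ≤ -m then k (-l) - k (-l+1) else 0 := by
    intro l
    have hcond : s ∈ Set.Ioc (0:ℝ) ((2:ℝ)^(-l)) ↔ l ≤ -m := by
      simp only [Set.mem_Ioc, hs0, true_and]
      constructor
      · intro h
        have : (2:ℝ)^(m-1) < 2^(-l) := lt_of_lt_of_le hs1 h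
        have := (zpow_lt_zpow_iff_right₀ (by norm_num : (1:ℝ) < 2)).1 this
        omega
      · intro h
        exact hs2.trans (zpow_le_zpow_right₀ one_le_two (by omega))
    by_cases hl : l ≤ -m
    · rw [hf]
      simp only [if_pos (hcond.2 hl), if_pos hl, mul_one]
      rw [alphaOf, zpow_neg]
      field_simp
    · rw [hf]
      simp only [if_neg (fun hc => hl (hcond.1 hc)), if_neg hl, mul_zero]
  -- reindex by g : ℕ → ℤ, g n = -m - n
  set g : ℕ → ℤ := fun n => -m - n with hg
  have hginj : Function.Injective g := by
    intro a b hab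
    simp only [hg] at hab
    omega
  have hgrange : ∀ l : ℤ, l ∉ Set.range g → f l = 0 := by
    intro l hl
    rw [hfl]
    rw [if_neg]
    intro hc
    exact hl ⟨(-m - l).toNat, by simp only [hg]; omega⟩
  have hfg : ∀ n : ℕ, (f ∘ g) n = k (m + n) - k (m + n + 1) := by
    intro n
    simp only [Function.comp, hfl, hg]
    rw [if_pos (by omega)]
    congr 2 <;> omega
  -- summability of f ∘ g
  have hsummable : Summable (f ∘ g) := by
    apply Summable.of_norm_bounded (g := fun n => (2:ℝ)^(-m) * |alphaOf k (g n)|)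
    · exact ((summable_abs_alpha hβ hk0).comp_injective hginj).mul_left _
    · intro n
      rw [Real.norm_eq_abs]
      show |f (g n)| ≤ _
      rw [hf]
      simp only []
      by_cases hc : s ∈ Set.Ioc (0:ℝ) ((2:ℝ)^(-(g n)))
      · rw [if_pos hc, mul_one, abs_mul, abs_of_pos (two_zpow_pos _)]
        rw [mul_comm (|alphaOf k (g n)|) _] 
        apply mul_le_mul_of_nonneg_right _ (abs_nonneg _)
        exact zpow_le_zpow_right₀ one_le_two (by simp only [hg]; omega)
      · rw [if_neg hc, mul_zero, mul_zero, abs_zero]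
        positivity
  -- partial sums telescope
  have htel : ∀ n : ℕ, ∑ i ∈ Finset.range n, (f ∘ g) i = k m - k (m + n) := by
    intro n
    rw [Finset.sum_congr rfl (fun i _ => hfg i)]
    have h0 := Finset.sum_range_sub' (fun i : ℕ => k (m + i)) n
    rw [show (k m - k (m + n)) = (fun i:ℕ => k (m + i)) 0 - (fun i:ℕ => k (m + i)) n by simp,
      ← h0]
    exact Finset.sum_congr rfl (fun i _ => by congr 1 <;> push_cast <;> ring)
  have hlim : Tendsto (fun n : ℕ => k (m + n)) atTop (nhds 0) := by
    apply (k_tendsto hβ hk0).comp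
    apply tendsto_atTop_add_const_left
    exact tendsto_natCast_atTop_atTop
  have htends : Tendsto (fun n : ℕ => ∑ i ∈ Finset.range n, (f ∘ g) i) atTop (nhds (k m)) := by
    simp only [htel]
    have := tendsto_const_nhds (x := k m) (f := atTop (α := ℕ)) |>.sub hlim
    simpa using this
  have hhs : HasSum (f ∘ g) (k m) := by
    have h1 := hsummable.hasSum
    have h2 := h1.tendsto_sum_nat
    have := tendsto_nhds_unique h2 htends
    rwa [this] at h1
  have : HasSum f (k m) := (hginj.hasSum_iff hgrange).1 hhs
  exact this.tsum_eq

end DyAux6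

namespace DyAux7
open DyAux DyAux5 DyAux6

lemma Ioi_eq_iUnion : Set.Ioi (0:ℝ) = ⋃ m : ℤ, Set.Ioc ((2:ℝ)^(m-1)) ((2:ℝ)^m) := by
  ext s
  simp only [Set.mem_Ioi, Set.mem_iUnion, Set.mem_Ioc]
  constructor
  · intro hs
    refine ⟨Int.clog 2 s, ?_, ?_⟩
    · by_contra h
      push_neg at h
      have h2 : s ≤ ((2:ℕ):ℝ) ^ (Int.clog 2 s - 1) := by push_cast; exact h
      have := (Int.le_zpow_iff_clog_le (by norm_num) hs).1 h2
      omega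
    · have := Int.self_le_zpow_clog (by norm_num : 1 < 2) s (R := ℝ)
      push_cast at this
      exact this
  · rintro ⟨m, h1, _⟩
    exact lt_trans (two_zpow_pos (m-1)) h1

lemma Ioc_disjoint : Pairwise (Function.onFun Disjoint (fun m : ℤ => Set.Ioc ((2:ℝ)^(m-1)) ((2:ℝ)^m))) := by
  intro m m' hmm'
  rw [Function.onFun, Set.disjoint_left]
  rintro s ⟨h1, h2⟩ ⟨h1', h2'⟩
  rcases lt_or_gt_of_ne hmm' with h | h
  · have : (2:ℝ)^m ≤ (2:ℝ)^(m'-1) := zpow_le_zpow_right₀ one_le_two (by omega)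
    linarith
  · have : (2:ℝ)^m' ≤ (2:ℝ)^(m-1) := zpow_le_zpow_right₀ one_le_two (by omega)
    linarith

variable {k : ℤ → ℝ}

lemma phi_integrable_and_integral (hβ : HasSum (beta k) 1) (hk0 : ∀ m, 0 ≤ k m) :
    MeasureTheory.IntegrableOn (phiOf k) (Set.Ioi (0:ℝ)) ∧
      (∫ s in Set.Ioi (0:ℝ), phiOf k s) = 1 := by
  set A : ℤ → Set ℝ := fun m => Set.Ioc ((2:ℝ)^(m-1)) ((2:ℝ)^m) with hA
  have hmeas : ∀ m : ℤ, MeasurableSet (A m) := fun m => measurableSet_Ioc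
  have hEq : ∀ m : ℤ, Set.EqOn (phiOf k) (fun _ => k m) (A m) := by
    intro m s hs
    exact phi_eval hβ hk0 hs.1 hs.2
  have hvol : ∀ m : ℤ, volume (A m) = ENNReal.ofReal ((2:ℝ)^(m-1)) := by
    intro m
    rw [hA]
    simp only [Real.volume_Ioc]
    congr 1
    have : (2:ℝ)^m = 2^(m-1) * 2 := by
      rw [← zpow_add_one₀ (by norm_num : (2:ℝ) ≠ 0)]; congr 1; ring
    rw [this]; ring
  have hint : ∀ m : ℤ, IntegrableOn (phiOf k) (A m) := by
    intro m
    rw [MeasureTheory.integrableOn_congr_fun (hEq m) (hmeas m)]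
    exact integrableOn_const (by rw [hvol]; exact ENNReal.ofReal_ne_top)
  have hnormint : ∀ m : ℤ, (∫ s in A m, ‖phiOf k s‖) = beta k m := by
    intro m
    rw [setIntegral_congr_fun (hmeas m) (g := fun _ => k m)
        (fun s hs => by rw [Real.norm_eq_abs, hEq m hs, abs_of_nonneg (hk0 m)]),
      setIntegral_const, measureReal_def, hvol, ENNReal.toReal_ofReal (by positivity), smul_eq_mul]
    rfl
  have hsummablenorm : Summable (fun m : ℤ => ∫ s in A m, ‖phiOf k s‖) := by
    apply Summable.congr hβ.summable
    intro m
    exact (hnormint m).symm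
  have hIntU : IntegrableOn (phiOf k) (⋃ m : ℤ, A m) :=
    integrableOn_iUnion_of_summable_integral_norm hint hsummablenorm
  have hIoi : IntegrableOn (phiOf k) (Set.Ioi (0:ℝ)) := by
    rw [Ioi_eq_iUnion]; exact hIntU
  refine ⟨hIoi, ?_⟩
  have hsum := hasSum_integral_iUnion hmeas Ioc_disjoint hIntU
  have heach : ∀ m : ℤ, (∫ s in A m, phiOf k s) = beta k m := by
    intro m
    rw [setIntegral_congr_fun (hmeas m) (hEq m), setIntegral_const, measureReal_def, hvol,
      ENNReal.toReal_ofReal (by positivity), smul_eq_mul]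
    rfl
  have hsum' : HasSum (beta k) (∫ s in ⋃ m : ℤ, A m, phiOf k s) :=
    hsum.congr_fun (fun m => (heach m).symm)
  have h1 : (∫ s in ⋃ m : ℤ, A m, phiOf k s) = 1 := hsum'.unique hβ
  rw [Ioi_eq_iUnion]
  exact h1

end DyAux7

/-- Lemma 3 (2): for `K ∈ 𝒦` with level values `k_j`, the sequence
`α_l = 2^{-l}(k_{-l} - k_{-l+1})` is absolutely summable with sum `1`, and the profile
`φ(s) = Σ_l α_l 2^l χ_{(0,2^{-l}]}(s)` represents `K` (`φ(δ(x,y)) = K(x,y)`), is absolutely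
integrable on `(0,∞)`, and has integral `1`. -/
theorem kernel_alpha_phi (K : ℝ → ℝ → ℝ) (k : ℤ → ℝ)
    (hK0 : ∀ x y : ℝ, 0 ≤ x → 0 ≤ y → 0 ≤ K x y)
    (hKdist : ∀ x y x' y' : ℝ, 0 ≤ x → 0 ≤ y → 0 ≤ x' → 0 ≤ y' →
      dyadicDist x y = dyadicDist x' y' → K x y = K x' y')
    (x₀ : ℝ) (hx₀ : 0 ≤ x₀)
    (hKnorm : (∫ y in Set.Ici (0:ℝ), K x₀ y) = 1)
    (hk : ∀ (j : ℤ) (x y : ℝ), 0 ≤ x → 0 ≤ y → dyadicDist x y = (2:ℝ) ^ j → K x y = k j) :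
    Summable (fun l : ℤ => |alphaOf k l|) ∧
      HasSum (alphaOf k) 1 ∧
      (∀ x y : ℝ, 0 ≤ x → 0 ≤ y → x ≠ y → phiOf k (dyadicDist x y) = K x y) ∧
      MeasureTheory.IntegrableOn (phiOf k) (Set.Ioi (0:ℝ)) ∧
      (∫ s in Set.Ioi (0:ℝ), phiOf k s) = 1 := by
  have hβ : HasSum (DyAux5.beta k) 1 := DyAux4.hasSum_beta K k x₀ hx₀ hKnorm hk
  have hk0 : ∀ m, 0 ≤ k m := DyAux4.k_nonneg K k hK0 hk
  obtain ⟨hInt, hIntval⟩ := DyAux7.phi_integrable_and_integral hβ hk0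
  refine ⟨DyAux5.summable_abs_alpha hβ hk0, DyAux5.hasSum_alpha hβ hk0, ?_, hInt, hIntval⟩
  intro x y hx hy hxy
  obtain ⟨m, hm⟩ := DyAux2.exists_dyadicDist_eq hx hy hxy
  rw [hm, DyAux6.phi_eval hβ hk0 (zpow_lt_zpow_right₀ (by norm_num : (1:ℝ) < 2) (by omega)) le_rfl]
  exact (hk m x y hx hy hm).symm
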